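/- Let N ≥ 1, let S > 0 and σ > 0, and let V ∈ ℝ^N. Let τx_0,…,τx_{N−1}, τy_0,…,τy_{N−1} be 2N independent real random variables, each with law gaussianReal 0 (S²σ²/2), and set τ_k = τx_k + i·τy_k ∈ ℂ. Then for every index j ∈ {0,…,N−1}, the random variable Re((F⁻¹(F(V) + τ))_j) is integrable with respect to the underlying product measure and its expectation equals V_j. -/

import Mathlib

open MeasureTheory ProbabilityTheory

/-- The unitary discrete Fourier transform on `ℂ^N`. -/
noncomputable def dft {N : ℕ} (z : Fin N → ℂ) : Fin N → ℂ := fun i =>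
  (1 / (Real.sqrt N : ℂ)) *
    ∑ n : Fin N, z n * Complex.exp (-(2 * (Real.pi : ℂ) * Complex.I * (i : ℕ) * (n : ℕ)) / N)

/-- The inverse unitary discrete Fourier transform on `ℂ^N`. -/
noncomputable def idft {N : ℕ} (z : Fin N → ℂ) : Fin N → ℂ := fun n =>
  (1 / (Real.sqrt N : ℂ)) *
    ∑ i : Fin N, z i * Complex.exp ((2 * (Real.pi : ℂ) * Complex.I * (i : ℕ) * (n : ℕ)) / N)

-- geometric sum of roots of unity
lemma root_sum (N : ℕ) (hN : 1 ≤ N) (n j : Fin N) :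
    ∑ i : Fin N, Complex.exp (2 * (Real.pi : ℂ) * Complex.I / N) ^ (((j : ℤ) - (n : ℤ)) * (i : ℕ)) =
      if n = j then (N : ℂ) else 0 := by
  set ζ : ℂ := Complex.exp (2 * (Real.pi : ℂ) * Complex.I / N)
  have hζ : IsPrimitiveRoot ζ N := Complex.isPrimitiveRoot_exp N (by omega)
  by_cases h : n = j
  · subst h
    simp
  · have hm : ¬ ((N : ℤ) ∣ ((j : ℤ) - (n : ℤ))) := by
      intro hd
      have h1 : (j : ℤ) - (n : ℤ) = 0 := by
        refine Int.eq_zero_of_abs_lt_dvd hd ?_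
        have hj := j.isLt; have hn := n.isLt
        rw [abs_sub_lt_iff]
        omega
      have : (n : ℕ) = (j : ℕ) := by omega
      exact h (Fin.ext this)
    set w : ℂ := ζ ^ ((j : ℤ) - (n : ℤ)) with hw
    have hw1 : w ≠ 1 := by
      rw [hw, Ne, hζ.zpow_eq_one_iff_dvd]
      exact hm
    have hwN : w ^ N = 1 := by
      rw [hw, ← zpow_natCast, ← zpow_mul, mul_comm, zpow_mul, zpow_natCast,
        hζ.pow_eq_one, one_zpow]
    have : ∀ i : Fin N, ζ ^ (((j : ℤ) - (n : ℤ)) * (i : ℕ)) = w ^ (i : ℕ) := by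
      intro i
      rw [hw, ← zpow_natCast (ζ ^ _), ← zpow_mul]
    simp_rw [this]
    rw [Fin.sum_univ_eq_sum_range (fun i => w ^ i) N, geom_sum_eq hw1, hwN]
    simp [h]

lemma idft_dft (N : ℕ) (hN : 1 ≤ N) (z : Fin N → ℂ) (j : Fin N) :
    idft (dft z) j = z j := by
  have hNne : (N : ℝ) ≠ 0 := Nat.cast_ne_zero.mpr (by omega)
  set ζ : ℂ := Complex.exp (2 * (Real.pi : ℂ) * Complex.I / N) with hζdef
  have hexp : ∀ k : ℤ, Complex.exp ((k : ℂ) * (2 * (Real.pi:ℂ) * Complex.I / N)) = ζ ^ k :=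
    fun k => by rw [hζdef, Complex.exp_int_mul]
  have hs : (Real.sqrt N : ℂ) * (Real.sqrt N : ℂ) = (N : ℂ) := by
    rw [← Complex.ofReal_mul, Real.mul_self_sqrt (Nat.cast_nonneg N)]
    norm_cast
  have hsne : (Real.sqrt N : ℂ) ≠ 0 := by
    simp [Real.sqrt_eq_zero', Complex.ofReal_eq_zero]
    positivity
  unfold idft dft
  have hterm : ∀ i : Fin N,
      ((1 / (Real.sqrt N : ℂ)) * ∑ n : Fin N, z n *
          Complex.exp (-(2 * (Real.pi : ℂ) * Complex.I * (i:ℕ) * (n:ℕ)) / N)) *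
        Complex.exp ((2 * (Real.pi : ℂ) * Complex.I * (i:ℕ) * (j:ℕ)) / N)
      = (1 / (Real.sqrt N : ℂ)) *
          ∑ n : Fin N, z n * ζ ^ (((j : ℤ) - (n : ℤ)) * (i : ℕ)) := by
    intro i
    rw [mul_assoc, Finset.sum_mul]
    congr 1
    refine Finset.sum_congr rfl fun n _ => ?_
    rw [mul_assoc]
    congr 1
    rw [← Complex.exp_add, ← hexp]
    congr 1
    push_cast
    ring
  rw [Finset.sum_congr rfl fun i _ => hterm i, ← Finset.mul_sum, Finset.sum_comm]
  have hinner : ∀ n : Fin N,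
      (∑ i : Fin N, z n * ζ ^ (((j : ℤ) - (n : ℤ)) * (i : ℕ)))
        = z n * (if n = j then (N : ℂ) else 0) := by
    intro n
    rw [← Finset.mul_sum, root_sum N hN n j]
  rw [Finset.sum_congr rfl fun n _ => hinner n]
  simp only [mul_ite, mul_zero]
  rw [Finset.sum_ite_eq' Finset.univ j (fun n => z n * (N:ℂ))]
  simp only [Finset.mem_univ, if_true]
  rw [← hs]
  field_simp


open scoped NNReal in
lemma integrable_id_gaussianReal {v : ℝ≥0} (hv : v ≠ 0) :
    Integrable (fun x : ℝ => x) (gaussianReal 0 v) := by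
  rw [gaussianReal_of_var_ne_zero _ hv, gaussianPDF_def,
    integrable_withDensity_iff (measurable_gaussianPDFReal 0 v).ennreal_ofReal
      (Filter.Eventually.of_forall fun x => ENNReal.ofReal_lt_top)]
  have hvpos : (0:ℝ) < (v:ℝ) := by positivity
  refine (((integrable_mul_exp_neg_mul_sq (by positivity : (0:ℝ) < 1/(2*(v:ℝ)))).mul_const
      ((Real.sqrt (2 * Real.pi * v))⁻¹)).congr ?_)
  filter_upwards with x
  rw [ENNReal.toReal_ofReal (gaussianPDFReal_nonneg 0 v x)]
  rw [gaussianPDFReal]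
  ring_nf

open scoped NNReal in
lemma integral_id_gaussianReal {v : ℝ≥0} (hv : v ≠ 0) :
    ∫ x, x ∂(gaussianReal 0 v) = 0 := by
  have hone : (⟨(-1:ℝ)^2, sq_nonneg _⟩ : ℝ≥0) = 1 := by
    ext; norm_num
  have hmap : (gaussianReal 0 v).map (fun x => -x) = gaussianReal 0 v := by
    have h := gaussianReal_map_const_mul (μ := 0) (v := v) (-1)
    rw [show ∀ p, NNReal.mk ((-1:ℝ)^2) p = 1 from fun p => by ext; norm_num] at h
    simpa [neg_one_mul] using h
  have h2 : ∫ x, x ∂(gaussianReal 0 v) = ∫ x, -x ∂(gaussianReal 0 v) := by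
    conv_lhs => rw [← hmap]
    rw [integral_map measurable_neg.aemeasurable]
    exact aestronglyMeasurable_id
  rw [integral_neg] at h2
  linarith

lemma map_eval_pi' {N : ℕ} {α : Type*} [MeasurableSpace α] (μ : Measure α)
    [IsProbabilityMeasure μ] (i : Fin N) :
    (Measure.pi (fun _ : Fin N => μ)).map (fun f => f i) = μ := by
  ext s hs
  rw [Measure.map_apply (measurable_pi_apply i) hs]
  have : (fun f : Fin N → α => f i) ⁻¹' s =
      Set.pi Set.univ (Function.update (fun _ : Fin N => Set.univ) i s) := by
    rw [← Set.eval_preimage]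
  rw [this, Measure.pi_pi]
  rw [Fintype.prod_eq_single i (fun j hj => by
    simp [Function.update_of_ne hj]), Function.update_self]

lemma coord_fst {N : ℕ} (ν : Measure ℝ) [IsProbabilityMeasure ν] (i : Fin N) :
    (Measure.pi (fun _ : Fin N => ν.prod ν)).map (fun τ : Fin N → ℝ × ℝ => (τ i).1) = ν := by
  have : (fun τ : Fin N → ℝ × ℝ => (τ i).1) =
      Prod.fst ∘ (fun τ : Fin N → ℝ × ℝ => τ i) := rfl
  rw [this, ← Measure.map_map measurable_fst (measurable_pi_apply i), map_eval_pi',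
    Measure.map_fst_prod, measure_univ, one_smul]

lemma coord_snd {N : ℕ} (ν : Measure ℝ) [IsProbabilityMeasure ν] (i : Fin N) :
    (Measure.pi (fun _ : Fin N => ν.prod ν)).map (fun τ : Fin N → ℝ × ℝ => (τ i).2) = ν := by
  have : (fun τ : Fin N → ℝ × ℝ => (τ i).2) =
      Prod.snd ∘ (fun τ : Fin N → ℝ × ℝ => τ i) := rfl
  rw [this, ← Measure.map_map measurable_snd (measurable_pi_apply i), map_eval_pi',
    Measure.map_snd_prod, measure_univ, one_smul]

lemma integrable_of_map {α : Type*} [MeasurableSpace α] {μ : Measure α} {ν : Measure ℝ}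
    {φ : α → ℝ} (hφ : Measurable φ) (hmap : μ.map φ = ν)
    (hint : Integrable (fun x : ℝ => x) ν) :
    Integrable φ μ ∧ ∫ a, φ a ∂μ = ∫ x, x ∂ν := by
  have h1 : Integrable (fun x : ℝ => x) (μ.map φ) := hmap ▸ hint
  constructor
  · exact (integrable_map_measure aestronglyMeasurable_id hφ.aemeasurable).mp h1
  · rw [← hmap]
    exact (integral_map hφ.aemeasurable aestronglyMeasurable_id).symm


/-- Unbiasedness of the GReDP mechanism: the real part of the `j`-th coordinate of
`F⁻¹(F(V) + τ)`, with circularly symmetric complex Gaussian noise `τ` of per-component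
variance `S²σ²/2`, is integrable and has expectation `V_j`. -/
theorem gredp_unbiased (N : ℕ) (hN : 1 ≤ N) (S σ : ℝ) (hS : 0 < S) (hσ : 0 < σ)
    (V : Fin N → ℝ) (j : Fin N) :
    Integrable
      (fun τ : Fin N → ℝ × ℝ =>
        (idft (fun k => dft (fun n => (V n : ℂ)) k
          + (((τ k).1 : ℂ) + Complex.I * ((τ k).2 : ℂ))) j).re)
      (Measure.pi (fun _ : Fin N =>
        (gaussianReal 0 ((S ^ 2 * σ ^ 2 / 2).toNNReal)).prod
          (gaussianReal 0 ((S ^ 2 * σ ^ 2 / 2).toNNReal)))) ∧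
    ∫ τ : Fin N → ℝ × ℝ,
        (idft (fun k => dft (fun n => (V n : ℂ)) k
          + (((τ k).1 : ℂ) + Complex.I * ((τ k).2 : ℂ))) j).re
      ∂(Measure.pi (fun _ : Fin N =>
        (gaussianReal 0 ((S ^ 2 * σ ^ 2 / 2).toNNReal)).prod
          (gaussianReal 0 ((S ^ 2 * σ ^ 2 / 2).toNNReal))))
      = V j := by

  have hv : (S ^ 2 * σ ^ 2 / 2).toNNReal ≠ 0 := by
    rw [Ne, Real.toNNReal_eq_zero, not_le]
    positivity
  set v : NNReal := (S ^ 2 * σ ^ 2 / 2).toNNReal with hvdef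
  set ν : Measure ℝ := gaussianReal 0 v with hνdef
  set PP : Measure (Fin N → ℝ × ℝ) := Measure.pi (fun _ : Fin N => ν.prod ν) with hPPdef
  set C : ℝ := (idft (dft (fun n => (V n : ℂ))) j).re with hCdef
  set c : Fin N → ℂ := fun i => (1 / (Real.sqrt N : ℂ)) *
    Complex.exp ((2 * (Real.pi : ℂ) * Complex.I * (i : ℕ) * (j : ℕ)) / N) with hcdef
  have hdecomp : (fun τ : Fin N → ℝ × ℝ =>
      (idft (fun k => dft (fun n => (V n : ℂ)) k
        + (((τ k).1 : ℂ) + Complex.I * ((τ k).2 : ℂ))) j).re)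
      = fun τ => C + ∑ i : Fin N, ((τ i).1 * (c i).re - (τ i).2 * (c i).im) := by
    funext τ
    have expand : idft (fun k => dft (fun n => (V n : ℂ)) k
        + (((τ k).1 : ℂ) + Complex.I * ((τ k).2 : ℂ))) j
        = idft (dft (fun n => (V n : ℂ))) j
          + ∑ i : Fin N, ((((τ i).1 : ℂ) + Complex.I * ((τ i).2 : ℂ)) * c i) := by
      have h2 : ∑ i : Fin N, ((((τ i).1 : ℂ) + Complex.I * ((τ i).2 : ℂ)) * c i)
          = (1 / (Real.sqrt N : ℂ)) * ∑ i : Fin N,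
              ((((τ i).1 : ℂ) + Complex.I * ((τ i).2 : ℂ)) *
                Complex.exp ((2 * (Real.pi : ℂ) * Complex.I * (i : ℕ) * (j : ℕ)) / N)) := by
        rw [Finset.mul_sum]
        apply Finset.sum_congr rfl
        intro i _
        rw [hcdef]
        ring
      rw [h2]
      simp only [idft]
      rw [← mul_add, ← Finset.sum_add_distrib]
      congr 1
      apply Finset.sum_congr rfl
      intro i _
      ring
    rw [expand, Complex.add_re, ← hCdef, Complex.re_sum]
    congr 1
    apply Finset.sum_congr rfl
    intro i _
    simp only [Complex.mul_re, Complex.add_re, Complex.add_im, Complex.mul_im,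
      Complex.ofReal_re, Complex.ofReal_im, Complex.I_re, Complex.I_im]
    ring
  have hfst : ∀ i : Fin N, Integrable (fun τ : Fin N → ℝ × ℝ => (τ i).1) PP ∧
      ∫ τ, (τ i).1 ∂PP = 0 := by
    intro i
    have h := integrable_of_map (μ := PP) (ν := ν)
      ((measurable_pi_apply i).fst) (coord_fst ν i) (integrable_id_gaussianReal hv)
    exact ⟨h.1, h.2.trans (integral_id_gaussianReal hv)⟩
  have hsnd : ∀ i : Fin N, Integrable (fun τ : Fin N → ℝ × ℝ => (τ i).2) PP ∧
      ∫ τ, (τ i).2 ∂PP = 0 := by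
    intro i
    have h := integrable_of_map (μ := PP) (ν := ν)
      ((measurable_pi_apply i).snd) (coord_snd ν i) (integrable_id_gaussianReal hv)
    exact ⟨h.1, h.2.trans (integral_id_gaussianReal hv)⟩
  have hterm : ∀ i : Fin N, Integrable
      (fun τ : Fin N → ℝ × ℝ => (τ i).1 * (c i).re - (τ i).2 * (c i).im) PP :=
    fun i => ((hfst i).1.mul_const _).sub ((hsnd i).1.mul_const _)
  have hintg : Integrable
      (fun τ : Fin N → ℝ × ℝ => C + ∑ i : Fin N,
        ((τ i).1 * (c i).re - (τ i).2 * (c i).im)) PP :=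
    (integrable_const C).add (integrable_finset_sum _ fun i _ => hterm i)
  have hCV : C = V j := by
    rw [hCdef, idft_dft N hN (fun n => (V n : ℂ)) j, Complex.ofReal_re]
  rw [hdecomp]
  refine ⟨hintg, ?_⟩
  rw [integral_add (integrable_const C) (integrable_finset_sum _ fun i _ => hterm i),
    integral_const, integral_finset_sum _ fun i _ => hterm i]
  have : ∀ i : Fin N, ∫ τ, ((τ i).1 * (c i).re - (τ i).2 * (c i).im) ∂PP = 0 := by
    intro i
    rw [integral_sub ((hfst i).1.mul_const _) ((hsnd i).1.mul_const _),
      integral_mul_const, integral_mul_const, (hfst i).2, (hsnd i).2]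
    ring
  rw [Finset.sum_congr rfl fun i _ => this i]
  simp [hCV]
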